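/- One-step consistency (second-order Taylor expansion) of the scheme: let d, r ∈ ℕ\{0}, R > 0, and let φ : ℝ^d → ℝ be four times continuously differentiable with bounded derivatives of orders 2, 3 and 4. Then there exists a constant C > 0, depending only on R, r, d and the sup-norms of the derivatives of φ of orders 2–4, such that for all x ∈ ℝ^d, all b ∈ ℝ^d and σ_1, …, σ_r ∈ ℝ^d with |b| ≤ R and |σ_p| ≤ R for every p, and all h ∈ (0,1]: | (1/(2r)) Σ_{p=1}^{r} [ φ(x + h b + √(r h) σ_p) + φ(x + h b − √(r h) σ_p) ] − φ(x) − h ∇φ(x)·b − (h/2) Σ_{i,j=1}^{d} a_{ij} ∂²_{x_i x_j} φ(x) | ≤ C h², where a_{ij} := Σ_{p=1}^{r} (σ_p)_i (σ_p)_j. -/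

import Mathlib

open MeasureTheory Set
noncomputable section
set_option maxHeartbeats 1000000
set_option maxSynthPendingDepth 5
set_option synthInstance.maxHeartbeats 400000

/-- Euclidean space `ℝ^d`. -/
abbrev E (d : ℕ) : Type := EuclideanSpace ℝ (Fin d)

/-- Second order partial derivative `∂²_{x_i x_j} φ(x)`. -/
def D2 {d : ℕ} (φ : E d → ℝ) (x : E d) (i j : Fin d) : ℝ :=
  fderiv ℝ (fun y => fderiv ℝ φ y (EuclideanSpace.single j 1)) x (EuclideanSpace.single i 1)

namespace OneStepConsistencyAux

variable {d : ℕ}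

lemma mul3_le {a1 a2 a3 b1 b2 b3 : ℝ} (h1 : a1 ≤ b1) (h2 : a2 ≤ b2) (h3 : a3 ≤ b3)
    (n1 : 0 ≤ a1) (n2 : 0 ≤ a2) (n3 : 0 ≤ a3) :
    a1 * a2 * a3 ≤ b1 * b2 * b3 := by
  have hb1 := n1.trans h1; have hb2 := n2.trans h2
  have t1 : a1 * a2 ≤ b1 * b2 := mul_le_mul h1 h2 n2 hb1
  exact mul_le_mul t1 h3 n3 (mul_nonneg hb1 hb2)

lemma mul4_le {a1 a2 a3 a4 b1 b2 b3 b4 : ℝ} (h1 : a1 ≤ b1) (h2 : a2 ≤ b2) (h3 : a3 ≤ b3)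
    (h4 : a4 ≤ b4) (n1 : 0 ≤ a1) (n2 : 0 ≤ a2) (n3 : 0 ≤ a3) (n4 : 0 ≤ a4) :
    a1 * a2 * a3 * a4 ≤ b1 * b2 * b3 * b4 := by
  have hb1 := n1.trans h1; have hb2 := n2.trans h2; have hb3 := n3.trans h3
  have t1 : a1 * a2 * a3 ≤ b1 * b2 * b3 := mul3_le h1 h2 h3 n1 n2 n3
  exact mul_le_mul t1 h4 n4 (mul_nonneg (mul_nonneg hb1 hb2) hb3)

lemma add_pow4 (a b : ℝ) : (a + b)^4 ≤ 8 * (a^4 + b^4) := by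
  nlinarith [sq_nonneg (a - b), sq_nonneg (a + b), sq_nonneg (a^2 - b^2), sq_nonneg (a^2 + b^2)]


lemma rem_bound {B4 R h s rr t : ℝ} (hB4nn : 0 ≤ B4) (hR : 0 < R) (hh0 : 0 < h) (hh1 : h ≤ 1)
    (hs2 : s * s = rr * h) (ht : 0 ≤ t) (hle : t ≤ h*R + s*R) :
    B4 * t^4 ≤ 16*B4*R^4*(1+rr^2)*h^2 := by
  have hw4 : t^4 ≤ (h*R + s*R)^4 := pow_le_pow_left₀ ht hle 4
  have h5 : (h*R + s*R)^4 ≤ 8*((h*R)^4 + (s*R)^4) := add_pow4 _ _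
  have h2le : h^2 ≤ 1 := by nlinarith
  have hh4 : h^4 ≤ h^2 := by nlinarith [h2le, sq_nonneg h]
  have h6 : (h*R)^4 ≤ h^2 * R^4 := by
    have := mul_le_mul_of_nonneg_right hh4 (le_of_lt (by positivity : (0:ℝ) < R^4))
    calc (h*R)^4 = h^4 * R^4 := by ring
      _ ≤ h^2 * R^4 := this
  have h7 : (s*R)^4 = rr^2*h^2*R^4 := by
    have hs4 : s^4 = (rr*h)^2 := by rw [show s^4 = (s*s)^2 by ring, hs2]
    calc (s*R)^4 = s^4 * R^4 := by ring
      _ = (rr*h)^2 * R^4 := by rw [hs4]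
      _ = rr^2*h^2*R^4 := by ring
  have h8 : t^4 ≤ 8*(h^2*R^4 + rr^2*h^2*R^4) := by linarith [hw4, h5, h6, h7.le]
  have hX : 0 ≤ B4*h^2*R^4*(1+rr^2) := by
    have h9 : 0 ≤ 1 + rr^2 := by positivity
    have h10 : 0 ≤ B4*h^2 := mul_nonneg hB4nn (sq_nonneg h)
    have h11 : 0 ≤ B4*h^2*R^4 := mul_nonneg h10 (by positivity)
    exact mul_nonneg h11 h9
  calc B4 * t^4 ≤ B4 * (8*(h^2*R^4 + rr^2*h^2*R^4)) := mul_le_mul_of_nonneg_left h8 hB4nn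
    _ ≤ 16*B4*R^4*(1+rr^2)*h^2 := by nlinarith [hX]

lemma combine_bound {B2 B3 B4 R h rr : ℝ}
    (aa q1 q2 q3 q4 rp rm : ℝ)
    (h1 : |aa| ≤ B2*R^2*h^2) (h2 : |q1| ≤ B3*R^3*h^2)
    (h3 : |q2| ≤ B3*R^3*rr*h^2) (h4 : |q3| ≤ B3*R^3*rr*h^2) (h5 : |q4| ≤ B3*R^3*rr*h^2)
    (h6 : |rp| ≤ 16*B4*R^4*(1+rr^2)*h^2) (h7 : |rm| ≤ 16*B4*R^4*(1+rr^2)*h^2) :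
    |aa + (1/3)*(q1+q2+q3+q4) + rp + rm|
      ≤ (B2*R^2 + B3*R^3 + B3*R^3*rr + 32*B4*R^4*(1+rr^2)) * h^2 := by
  have t1 := abs_add_le (aa + (1/3)*(q1+q2+q3+q4) + rp) rm
  have t2 := abs_add_le (aa + (1/3)*(q1+q2+q3+q4)) rp
  have t3 := abs_add_le aa ((1/3)*(q1+q2+q3+q4))
  have t4 : |(1/3)*(q1+q2+q3+q4)| = (1/3)*|q1+q2+q3+q4| := by
    rw [abs_mul]; norm_num
  rw [t4] at t3
  have t5 := abs_add_le (q1+q2+q3) q4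
  have t6 := abs_add_le (q1+q2) q3
  have t7 := abs_add_le q1 q2
  linarith [t1, t2, t3, t5, t6, t7, abs_nonneg (q1+q2+q3+q4), abs_nonneg aa,
    abs_nonneg q1, abs_nonneg q2, abs_nonneg q3, abs_nonneg q4, abs_nonneg rp, abs_nonneg rm]

lemma abs_apply2 (A : E d →L[ℝ] (E d →L[ℝ] ℝ)) (a b : E d) :
    |A a b| ≤ ‖A‖ * ‖a‖ * ‖b‖ := by
  calc |A a b| = ‖A a b‖ := (Real.norm_eq_abs _).symm
    _ ≤ ‖A a‖ * ‖b‖ := (A a).le_opNorm b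
    _ ≤ (‖A‖ * ‖a‖) * ‖b‖ :=
        mul_le_mul_of_nonneg_right (A.le_opNorm a) (norm_nonneg _)

lemma abs_apply3 (A : E d →L[ℝ] (E d →L[ℝ] (E d →L[ℝ] ℝ))) (a b c : E d) :
    |A a b c| ≤ ‖A‖ * ‖a‖ * ‖b‖ * ‖c‖ := by
  calc |A a b c| = ‖A a b c‖ := (Real.norm_eq_abs _).symm
    _ ≤ ‖A a b‖ * ‖c‖ := (A a b).le_opNorm c
    _ ≤ ((‖A a‖ * ‖b‖)) * ‖c‖ :=
        mul_le_mul_of_nonneg_right ((A a).le_opNorm b) (norm_nonneg _)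
    _ ≤ ((‖A‖ * ‖a‖) * ‖b‖) * ‖c‖ :=
        mul_le_mul_of_nonneg_right
          (mul_le_mul_of_nonneg_right (A.le_opNorm a) (norm_nonneg _)) (norm_nonneg _)

lemma abs_apply4 (A : E d →L[ℝ] (E d →L[ℝ] (E d →L[ℝ] (E d →L[ℝ] ℝ)))) (a b c e : E d) :
    |A a b c e| ≤ ‖A‖ * ‖a‖ * ‖b‖ * ‖c‖ * ‖e‖ := by
  calc |A a b c e| = ‖A a b c e‖ := (Real.norm_eq_abs _).symm
    _ ≤ ‖A a b c‖ * ‖e‖ := (A a b c).le_opNorm e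
    _ ≤ (‖A a b‖ * ‖c‖) * ‖e‖ :=
        mul_le_mul_of_nonneg_right ((A a b).le_opNorm c) (norm_nonneg _)
    _ ≤ ((‖A a‖ * ‖b‖) * ‖c‖) * ‖e‖ :=
        mul_le_mul_of_nonneg_right
          (mul_le_mul_of_nonneg_right ((A a).le_opNorm b) (norm_nonneg _)) (norm_nonneg _)
    _ ≤ (((‖A‖ * ‖a‖) * ‖b‖) * ‖c‖) * ‖e‖ :=
        mul_le_mul_of_nonneg_right (mul_le_mul_of_nonneg_right
          (mul_le_mul_of_nonneg_right (A.le_opNorm a) (norm_nonneg _)) (norm_nonneg _))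
          (norm_nonneg _)

lemma basis_sum (σ : E d) : σ = ∑ i, σ i • EuclideanSpace.single i (1:ℝ) := by
  have h := (EuclideanSpace.basisFun (Fin d) ℝ).sum_repr σ
  simp only [EuclideanSpace.basisFun_apply, EuclideanSpace.basisFun_repr] at h
  exact h.symm

lemma bilin_basis (A : E d →L[ℝ] (E d →L[ℝ] ℝ)) (σ : E d) :
    A σ σ = ∑ i, ∑ j, σ i * σ j *
      A (EuclideanSpace.single i 1) (EuclideanSpace.single j 1) := by
  conv_lhs => rw [basis_sum σ]
  simp only [map_sum, _root_.map_smul, ContinuousLinearMap.sum_apply,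
    ContinuousLinearMap.smul_apply, ContinuousLinearMap.coe_sum', Finset.sum_apply, smul_eq_mul,
    Finset.mul_sum, Finset.sum_mul]
  rw [Finset.sum_comm]
  refine Finset.sum_congr rfl fun i _ => Finset.sum_congr rfl fun j _ => by ring

/-- Norm of second `fderiv` equals norm of the second iterated derivative. -/
lemma norm_F2_eq (φ : E d → ℝ) (y : E d) :
    ‖fderiv ℝ (fderiv ℝ φ) y‖ = ‖iteratedFDeriv ℝ 2 φ y‖ := by
  calc ‖fderiv ℝ (fderiv ℝ φ) y‖
      = ‖iteratedFDeriv ℝ 0 (fderiv ℝ (fderiv ℝ φ)) y‖ := norm_iteratedFDeriv_zero.symm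
    _ = ‖iteratedFDeriv ℝ (0+1) (fderiv ℝ φ) y‖ := norm_iteratedFDeriv_fderiv
    _ = ‖iteratedFDeriv ℝ (1+1) φ y‖ := norm_iteratedFDeriv_fderiv
    _ = ‖iteratedFDeriv ℝ 2 φ y‖ := by norm_num

lemma norm_F3_eq (φ : E d → ℝ) (y : E d) :
    ‖fderiv ℝ (fderiv ℝ (fderiv ℝ φ)) y‖ = ‖iteratedFDeriv ℝ 3 φ y‖ := by
  calc ‖fderiv ℝ (fderiv ℝ (fderiv ℝ φ)) y‖
      = ‖iteratedFDeriv ℝ 0 (fderiv ℝ (fderiv ℝ (fderiv ℝ φ))) y‖ := norm_iteratedFDeriv_zero.symm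
    _ = ‖iteratedFDeriv ℝ (0+1) (fderiv ℝ (fderiv ℝ φ)) y‖ := norm_iteratedFDeriv_fderiv
    _ = ‖iteratedFDeriv ℝ (1+1) (fderiv ℝ φ) y‖ := norm_iteratedFDeriv_fderiv
    _ = ‖iteratedFDeriv ℝ (2+1) φ y‖ := norm_iteratedFDeriv_fderiv
    _ = ‖iteratedFDeriv ℝ 3 φ y‖ := by norm_num

lemma norm_F4_eq (φ : E d → ℝ) (y : E d) :
    ‖fderiv ℝ (fderiv ℝ (fderiv ℝ (fderiv ℝ φ))) y‖ = ‖iteratedFDeriv ℝ 4 φ y‖ := by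
  calc ‖fderiv ℝ (fderiv ℝ (fderiv ℝ (fderiv ℝ φ))) y‖
      = ‖iteratedFDeriv ℝ 0 (fderiv ℝ (fderiv ℝ (fderiv ℝ (fderiv ℝ φ)))) y‖ :=
        norm_iteratedFDeriv_zero.symm
    _ = ‖iteratedFDeriv ℝ (0+1) (fderiv ℝ (fderiv ℝ (fderiv ℝ φ))) y‖ := norm_iteratedFDeriv_fderiv
    _ = ‖iteratedFDeriv ℝ (1+1) (fderiv ℝ (fderiv ℝ φ)) y‖ := norm_iteratedFDeriv_fderiv
    _ = ‖iteratedFDeriv ℝ (2+1) (fderiv ℝ φ) y‖ := norm_iteratedFDeriv_fderiv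
    _ = ‖iteratedFDeriv ℝ (3+1) φ y‖ := norm_iteratedFDeriv_fderiv
    _ = ‖iteratedFDeriv ℝ 4 φ y‖ := by norm_num

/-- `D2` in terms of the second `fderiv`. -/
lemma D2_eq {φ : E d → ℝ} (hφ : ContDiff ℝ 4 φ) (x : E d) (i j : Fin d) :
    D2 φ x i j = fderiv ℝ (fderiv ℝ φ) x
      (EuclideanSpace.single i 1) (EuclideanSpace.single j 1) := by
  have hc1 : ContDiff ℝ 3 (fderiv ℝ φ) := hφ.fderiv_right (by norm_num)
  have hd1 : Differentiable ℝ (fderiv ℝ φ) := hc1.differentiable (by norm_num)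
  unfold D2
  rw [fderiv_clm_apply (hd1 x) (differentiableAt_const _)]
  simp [ContinuousLinearMap.flip_apply]

/-- Third-order Taylor expansion with a (crude) fourth-order remainder bound. -/
lemma taylor3 {φ : E d → ℝ} (hφ : ContDiff ℝ 4 φ) {B4 : ℝ}
    (hB4 : ∀ y, ‖fderiv ℝ (fderiv ℝ (fderiv ℝ (fderiv ℝ φ))) y‖ ≤ B4) (x v : E d) :
    |φ (x + v) - φ x - fderiv ℝ φ x v
      - 1/2 * (fderiv ℝ (fderiv ℝ φ) x v v)
      - 1/6 * (fderiv ℝ (fderiv ℝ (fderiv ℝ φ)) x v v v)| ≤ B4 * ‖v‖^4 := by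
  have hB4nn : 0 ≤ B4 := le_trans (norm_nonneg _) (hB4 x)
  have hB : 0 ≤ B4 * ‖v‖^4 := mul_nonneg hB4nn (by positivity)
  have hc1 : ContDiff ℝ 3 (fderiv ℝ φ) := hφ.fderiv_right (by norm_num)
  have hc2 : ContDiff ℝ 2 (fderiv ℝ (fderiv ℝ φ)) := hc1.fderiv_right (by norm_num)
  have hc3 : ContDiff ℝ 1 (fderiv ℝ (fderiv ℝ (fderiv ℝ φ))) := hc2.fderiv_right (by norm_num)
  have hd0 : Differentiable ℝ φ := hφ.differentiable (by norm_num)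
  have hd1 : Differentiable ℝ (fderiv ℝ φ) := hc1.differentiable (by norm_num)
  have hd2 : Differentiable ℝ (fderiv ℝ (fderiv ℝ φ)) := hc2.differentiable (by norm_num)
  have hd3 : Differentiable ℝ (fderiv ℝ (fderiv ℝ (fderiv ℝ φ))) :=
    hc3.differentiable (by norm_num)
  set c : ℝ → E d := fun t => x + t • v with hc
  have hline : ∀ t : ℝ, HasDerivAt c v t := by
    intro t
    have h1 : HasDerivAt (fun t : ℝ => t • v) ((1:ℝ) • v) t := (hasDerivAt_id t).smul_const v
    have h2 := h1.const_add x
    rw [one_smul] at h2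
    exact h2
  have hg0 : ∀ t, HasDerivAt (fun t => φ (c t)) (fderiv ℝ φ (c t) v) t := fun t =>
    (hd0 (c t)).hasFDerivAt.comp_hasDerivAt t (hline t)
  have hg1 : ∀ t, HasDerivAt (fun t => fderiv ℝ φ (c t) v)
      (fderiv ℝ (fderiv ℝ φ) (c t) v v) t := by
    intro t
    have h1 : HasDerivAt (fun t => fderiv ℝ φ (c t)) (fderiv ℝ (fderiv ℝ φ) (c t) v) t :=
      (hd1 (c t)).hasFDerivAt.comp_hasDerivAt t (hline t)
    simpa using h1.clm_apply (hasDerivAt_const t v)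
  have hg2 : ∀ t, HasDerivAt (fun t => fderiv ℝ (fderiv ℝ φ) (c t) v v)
      (fderiv ℝ (fderiv ℝ (fderiv ℝ φ)) (c t) v v v) t := by
    intro t
    have h1 : HasDerivAt (fun t => fderiv ℝ (fderiv ℝ φ) (c t))
        (fderiv ℝ (fderiv ℝ (fderiv ℝ φ)) (c t) v) t :=
      (hd2 (c t)).hasFDerivAt.comp_hasDerivAt t (hline t)
    have h2 : HasDerivAt (fun t => fderiv ℝ (fderiv ℝ φ) (c t) v)
        (fderiv ℝ (fderiv ℝ (fderiv ℝ φ)) (c t) v v) t := by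
      simpa using h1.clm_apply (hasDerivAt_const t v)
    simpa using h2.clm_apply (hasDerivAt_const t v)
  have hg3 : ∀ t, HasDerivAt (fun t => fderiv ℝ (fderiv ℝ (fderiv ℝ φ)) (c t) v v v)
      (fderiv ℝ (fderiv ℝ (fderiv ℝ (fderiv ℝ φ))) (c t) v v v v) t := by
    intro t
    have h1 : HasDerivAt (fun t => fderiv ℝ (fderiv ℝ (fderiv ℝ φ)) (c t))
        (fderiv ℝ (fderiv ℝ (fderiv ℝ (fderiv ℝ φ))) (c t) v) t :=
      (hd3 (c t)).hasFDerivAt.comp_hasDerivAt t (hline t)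
    have h2 : HasDerivAt (fun t => fderiv ℝ (fderiv ℝ (fderiv ℝ φ)) (c t) v)
        (fderiv ℝ (fderiv ℝ (fderiv ℝ (fderiv ℝ φ))) (c t) v v) t := by
      simpa using h1.clm_apply (hasDerivAt_const t v)
    have h3 : HasDerivAt (fun t => fderiv ℝ (fderiv ℝ (fderiv ℝ φ)) (c t) v v)
        (fderiv ℝ (fderiv ℝ (fderiv ℝ (fderiv ℝ φ))) (c t) v v v) t := by
      simpa using h2.clm_apply (hasDerivAt_const t v)
    simpa using h3.clm_apply (hasDerivAt_const t v)
  have hbound : ∀ t : ℝ, ‖fderiv ℝ (fderiv ℝ (fderiv ℝ (fderiv ℝ φ))) (c t) v v v v‖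
      ≤ B4 * ‖v‖^4 := by
    intro t
    have h1 := abs_apply4 (fderiv ℝ (fderiv ℝ (fderiv ℝ (fderiv ℝ φ))) (c t)) v v v v
    rw [← Real.norm_eq_abs] at h1
    refine h1.trans ?_
    calc ‖fderiv ℝ (fderiv ℝ (fderiv ℝ (fderiv ℝ φ))) (c t)‖ * ‖v‖ * ‖v‖ * ‖v‖ * ‖v‖
        ≤ B4 * ‖v‖ * ‖v‖ * ‖v‖ * ‖v‖ := by
          have := hB4 (c t)
          have hv := norm_nonneg v
          nlinarith [norm_nonneg (fderiv ℝ (fderiv ℝ (fderiv ℝ (fderiv ℝ φ))) (c t)),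
            mul_nonneg (mul_nonneg hv hv) (mul_nonneg hv hv)]
      _ = B4 * ‖v‖^4 := by ring
  -- mean value chain on [0,1]
  set B := B4 * ‖v‖^4 with hBdef
  have he3 : ∀ t ∈ Icc (0:ℝ) 1,
      ‖fderiv ℝ (fderiv ℝ (fderiv ℝ φ)) (c t) v v v
        - fderiv ℝ (fderiv ℝ (fderiv ℝ φ)) (c 0) v v v‖ ≤ B := by
    intro t ht
    have h := norm_image_sub_le_of_norm_deriv_le_segment'
      (f := fun t => fderiv ℝ (fderiv ℝ (fderiv ℝ φ)) (c t) v v v)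
      (f' := fun t => fderiv ℝ (fderiv ℝ (fderiv ℝ (fderiv ℝ φ))) (c t) v v v v)
      (fun y _ => (hg3 y).hasDerivWithinAt) (fun y _ => hbound y) t ht
    have h2 : B * (t - 0) ≤ B := by nlinarith [ht.1, ht.2]
    linarith
  have he2 : ∀ t ∈ Icc (0:ℝ) 1,
      ‖fderiv ℝ (fderiv ℝ φ) (c t) v v - fderiv ℝ (fderiv ℝ φ) (c 0) v v
        - t * (fderiv ℝ (fderiv ℝ (fderiv ℝ φ)) (c 0) v v v)‖ ≤ B := by
    intro t ht
    have hder : ∀ y : ℝ, HasDerivAt (fun t => fderiv ℝ (fderiv ℝ φ) (c t) v v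
        - fderiv ℝ (fderiv ℝ φ) (c 0) v v
        - t * (fderiv ℝ (fderiv ℝ (fderiv ℝ φ)) (c 0) v v v))
        (fderiv ℝ (fderiv ℝ (fderiv ℝ φ)) (c y) v v v
          - fderiv ℝ (fderiv ℝ (fderiv ℝ φ)) (c 0) v v v) y := fun y => by
      exact (((hg2 y).sub_const _).sub (hasDerivAt_mul_const _))
    have h := norm_image_sub_le_of_norm_deriv_le_segment'
      (fun y _ => (hder y).hasDerivWithinAt)
      (fun y hy => he3 y (Ico_subset_Icc_self hy)) t ht
    simp only [zero_mul, sub_zero, sub_self] at h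
    have h2 : B * (t - 0) ≤ B := by nlinarith [ht.1, ht.2]
    linarith
  have he1 : ∀ t ∈ Icc (0:ℝ) 1,
      ‖fderiv ℝ φ (c t) v - fderiv ℝ φ (c 0) v
        - t * (fderiv ℝ (fderiv ℝ φ) (c 0) v v)
        - t^2/2 * (fderiv ℝ (fderiv ℝ (fderiv ℝ φ)) (c 0) v v v)‖ ≤ B := by
    intro t ht
    have hpow2 : ∀ (y : ℝ) (k : ℝ), HasDerivAt (fun t : ℝ => t^2/2 * k) (y * k) y := by
      intro y k
      have h1 := ((hasDerivAt_pow 2 y).div_const 2).mul_const k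
      have e : ((2:ℕ):ℝ) * y^(2-1)/2 * k = y * k := by push_cast; ring_nf
      exact e ▸ h1
    have hder : ∀ y : ℝ, HasDerivAt (fun t => fderiv ℝ φ (c t) v - fderiv ℝ φ (c 0) v
        - t * (fderiv ℝ (fderiv ℝ φ) (c 0) v v)
        - t^2/2 * (fderiv ℝ (fderiv ℝ (fderiv ℝ φ)) (c 0) v v v))
        (fderiv ℝ (fderiv ℝ φ) (c y) v v - fderiv ℝ (fderiv ℝ φ) (c 0) v v
          - y * (fderiv ℝ (fderiv ℝ (fderiv ℝ φ)) (c 0) v v v)) y := fun y => by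
      exact (((hg1 y).sub_const _).sub (hasDerivAt_mul_const _)).sub (hpow2 y _)
    have h := norm_image_sub_le_of_norm_deriv_le_segment'
      (fun y _ => (hder y).hasDerivWithinAt)
      (fun y hy => he2 y (Ico_subset_Icc_self hy)) t ht
    norm_num at h
    have h2 : B * (t - 0) ≤ B := by nlinarith [ht.1, ht.2]
    rw [Real.norm_eq_abs]
    linarith [h, h2]
  have he0 : ‖φ (c 1) - φ (c 0) - 1 * (fderiv ℝ φ (c 0) v)
      - 1^2/2 * (fderiv ℝ (fderiv ℝ φ) (c 0) v v)
      - 1^3/6 * (fderiv ℝ (fderiv ℝ (fderiv ℝ φ)) (c 0) v v v)‖ ≤ B := by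
    have hpow2 : ∀ (y : ℝ) (k : ℝ), HasDerivAt (fun t : ℝ => t^2/2 * k) (y * k) y := by
      intro y k
      have h1 := ((hasDerivAt_pow 2 y).div_const 2).mul_const k
      have e : ((2:ℕ):ℝ) * y^(2-1)/2 * k = y * k := by push_cast; ring_nf
      exact e ▸ h1
    have hpow3 : ∀ (y : ℝ) (k : ℝ), HasDerivAt (fun t : ℝ => t^3/6 * k) (y^2/2 * k) y := by
      intro y k
      have h1 := ((hasDerivAt_pow 3 y).div_const 6).mul_const k
      have e : ((3:ℕ):ℝ) * y^(3-1)/6 * k = y^2/2 * k := by push_cast; ring_nf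
      exact e ▸ h1
    have hder : ∀ y : ℝ, HasDerivAt (fun t => φ (c t) - φ (c 0) - t * (fderiv ℝ φ (c 0) v)
        - t^2/2 * (fderiv ℝ (fderiv ℝ φ) (c 0) v v)
        - t^3/6 * (fderiv ℝ (fderiv ℝ (fderiv ℝ φ)) (c 0) v v v))
        (fderiv ℝ φ (c y) v - fderiv ℝ φ (c 0) v
          - y * (fderiv ℝ (fderiv ℝ φ) (c 0) v v)
          - y^2/2 * (fderiv ℝ (fderiv ℝ (fderiv ℝ φ)) (c 0) v v v)) y := fun y => by
      exact ((((hg0 y).sub_const _).sub (hasDerivAt_mul_const _)).sub (hpow2 y _)).sub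
        (hpow3 y _)
    have h := norm_image_sub_le_of_norm_deriv_le_segment'
      (fun y _ => (hder y).hasDerivWithinAt)
      (fun y hy => he1 y (Ico_subset_Icc_self hy)) 1 (by norm_num)
    norm_num at h ⊢
    exact h
  have hc0 : c 0 = x := by simp [hc]
  have hc1' : c 1 = x + v := by simp [hc]
  rw [hc0, hc1', Real.norm_eq_abs] at he0
  calc |φ (x + v) - φ x - fderiv ℝ φ x v - 1/2 * (fderiv ℝ (fderiv ℝ φ) x v v)
        - 1/6 * (fderiv ℝ (fderiv ℝ (fderiv ℝ φ)) x v v v)|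
      = |φ (x + v) - φ x - 1 * (fderiv ℝ φ x v) - 1^2/2 * (fderiv ℝ (fderiv ℝ φ) x v v)
        - 1^3/6 * (fderiv ℝ (fderiv ℝ (fderiv ℝ φ)) x v v v)| := by ring_nf
    _ ≤ B := he0

end OneStepConsistencyAux

open OneStepConsistencyAux in
/-- One-step consistency of the semi-Lagrangian scheme.
For `φ ∈ C⁴` with bounded derivatives of orders 2, 3 and 4, there is a constant `C > 0`,
depending only on `R`, `r`, `d` and the sup-norms of those derivatives, such that for all
`x`, all `b, σ_1, …, σ_r` of norm at most `R`, and all `h ∈ (0,1]`, the symmetric average of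
`φ` over the one-step discrete characteristics `x + hb ± √(rh) σ_p` equals
`φ(x) + h ∇φ(x)·b + (h/2) Σ_{ij} a_{ij} ∂²_{ij}φ(x)`, with `a_{ij} = Σ_p (σ_p)_i (σ_p)_j`,
up to an error of at most `C h²`. -/
theorem one_step_consistency
    (d r : ℕ) (hd : 0 < d) (hr : 0 < r) (R : ℝ) (hR : 0 < R)
    (φ : E d → ℝ) (hφ : ContDiff ℝ 4 φ)
    (hbd2 : ∃ B, ∀ x, ‖iteratedFDeriv ℝ 2 φ x‖ ≤ B)
    (hbd3 : ∃ B, ∀ x, ‖iteratedFDeriv ℝ 3 φ x‖ ≤ B)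
    (hbd4 : ∃ B, ∀ x, ‖iteratedFDeriv ℝ 4 φ x‖ ≤ B) :
    ∃ C > 0, ∀ (x b : E d) (σ : Fin r → E d), ‖b‖ ≤ R → (∀ p, ‖σ p‖ ≤ R) →
      ∀ h : ℝ, 0 < h → h ≤ 1 →
      |(1/(2*(r:ℝ))) * ∑ p : Fin r,
          (φ (x + h • b + Real.sqrt (r * h) • σ p) + φ (x + h • b - Real.sqrt (r * h) • σ p))
        - φ x - h * fderiv ℝ φ x b
        - (h/2) * ∑ i : Fin d, ∑ j : Fin d, (∑ p : Fin r, σ p i * σ p j) * D2 φ x i j|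
      ≤ C * h^2 := by
  obtain ⟨B2, hB2⟩ := hbd2
  obtain ⟨B3, hB3⟩ := hbd3
  obtain ⟨B4, hB4⟩ := hbd4
  have hB2' : ∀ y, ‖fderiv ℝ (fderiv ℝ φ) y‖ ≤ B2 := fun y => by
    rw [norm_F2_eq]; exact hB2 y
  have hB3' : ∀ y, ‖fderiv ℝ (fderiv ℝ (fderiv ℝ φ)) y‖ ≤ B3 := fun y => by
    rw [norm_F3_eq]; exact hB3 y
  have hB4' : ∀ y, ‖fderiv ℝ (fderiv ℝ (fderiv ℝ (fderiv ℝ φ))) y‖ ≤ B4 := fun y => by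
    rw [norm_F4_eq]; exact hB4 y
  have hB2nn : 0 ≤ B2 := le_trans (norm_nonneg _) (hB2 0)
  have hB3nn : 0 ≤ B3 := le_trans (norm_nonneg _) (hB3 0)
  have hB4nn : 0 ≤ B4 := le_trans (norm_nonneg _) (hB4 0)
  set K0 : ℝ := B2*R^2 + B3*R^3 + B3*R^3*r + 32*B4*R^4*(1+(r:ℝ)^2) with hK0def
  have hK0nn : 0 ≤ K0 := by
    have h1 : 0 ≤ B2*R^2 := mul_nonneg hB2nn (sq_nonneg R)
    have h2 : 0 ≤ B3*R^3 := mul_nonneg hB3nn (by positivity)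
    have h3 : 0 ≤ B3*R^3*r := mul_nonneg h2 (Nat.cast_nonneg r)
    have h4 : 0 ≤ 32*B4*R^4*(1+(r:ℝ)^2) := by
      have : 0 ≤ 32*B4 := by linarith
      have : 0 ≤ 32*B4*R^4 := mul_nonneg this (by positivity)
      exact mul_nonneg this (by positivity)
    rw [hK0def]; linarith
  refine ⟨K0 + 1, by linarith, ?_⟩
  intro x b σ hb hσ h hh0 hh1
  have hrpos : (0:ℝ) < r := Nat.cast_pos.mpr hr
  have hrh : (0:ℝ) ≤ (r:ℝ) * h := by positivity
  have hs2 : Real.sqrt ((r:ℝ) * h) * Real.sqrt ((r:ℝ) * h) = (r:ℝ) * h :=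
    Real.mul_self_sqrt hrh
  have hs0 : (0:ℝ) ≤ Real.sqrt ((r:ℝ) * h) := Real.sqrt_nonneg _
  set s : ℝ := Real.sqrt ((r:ℝ) * h) with hsdef
  -- useful norm bounds
  have hu : ‖h • b‖ ≤ h * R := by
    rw [norm_smul, Real.norm_eq_abs, abs_of_pos hh0]
    exact mul_le_mul_of_nonneg_left hb hh0.le
  have hT := taylor3 hφ hB4' x
  -- per-p estimate
  have hJ : ∀ p : Fin r,
      |(φ (x + h • b + s • σ p) + φ (x + h • b - s • σ p))
        - 2*φ x - 2*(h * fderiv ℝ φ x b)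
        - ((r:ℝ)*h) * fderiv ℝ (fderiv ℝ φ) x (σ p) (σ p)| ≤ K0 * h^2 := by
    intro p
    have hv : ‖s • σ p‖ ≤ s * R := by
      rw [norm_smul, Real.norm_eq_abs, abs_of_nonneg hs0]
      exact mul_le_mul_of_nonneg_left (hσ p) hs0
    have hwp : x + h • b + s • σ p = x + (h • b + s • σ p) := by rw [add_assoc]
    have hwm : x + h • b - s • σ p = x + (h • b - s • σ p) := by rw [add_sub_assoc]
    have ep := hT (h • b + s • σ p)
    have em := hT (h • b - s • σ p)
    -- decomposition
    have hdecomp : (φ (x + h • b + s • σ p) + φ (x + h • b - s • σ p))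
        - 2*φ x - 2*(h * fderiv ℝ φ x b)
        - ((r:ℝ)*h) * fderiv ℝ (fderiv ℝ φ) x (σ p) (σ p)
        = fderiv ℝ (fderiv ℝ φ) x (h • b) (h • b)
          + (1/3) * (fderiv ℝ (fderiv ℝ (fderiv ℝ φ)) x (h • b) (h • b) (h • b)
            + fderiv ℝ (fderiv ℝ (fderiv ℝ φ)) x (h • b) (s • σ p) (s • σ p)
            + fderiv ℝ (fderiv ℝ (fderiv ℝ φ)) x (s • σ p) (h • b) (s • σ p)
            + fderiv ℝ (fderiv ℝ (fderiv ℝ φ)) x (s • σ p) (s • σ p) (h • b))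
          + (φ (x + (h • b + s • σ p)) - φ x - fderiv ℝ φ x (h • b + s • σ p)
            - 1/2 * (fderiv ℝ (fderiv ℝ φ) x (h • b + s • σ p) (h • b + s • σ p))
            - 1/6 * (fderiv ℝ (fderiv ℝ (fderiv ℝ φ)) x (h • b + s • σ p) (h • b + s • σ p)
                (h • b + s • σ p)))
          + (φ (x + (h • b - s • σ p)) - φ x - fderiv ℝ φ x (h • b - s • σ p)
            - 1/2 * (fderiv ℝ (fderiv ℝ φ) x (h • b - s • σ p) (h • b - s • σ p))
            - 1/6 * (fderiv ℝ (fderiv ℝ (fderiv ℝ φ)) x (h • b - s • σ p) (h • b - s • σ p)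
                (h • b - s • σ p))) := by
      rw [hwp, hwm, ← hs2]
      simp only [map_add, map_sub, _root_.map_smul, ContinuousLinearMap.add_apply,
        ContinuousLinearMap.sub_apply, ContinuousLinearMap.smul_apply, smul_eq_mul]
      ring
    -- individual bounds
    have b1 : |fderiv ℝ (fderiv ℝ φ) x (h • b) (h • b)| ≤ B2*R^2*h^2 := by
      refine (abs_apply2 _ _ _).trans ?_
      calc ‖fderiv ℝ (fderiv ℝ φ) x‖ * ‖h • b‖ * ‖h • b‖
          ≤ B2 * (h*R) * (h*R) :=
            mul3_le (hB2' x) hu hu (norm_nonneg _) (norm_nonneg _) (norm_nonneg _)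
        _ = B2*R^2*h^2 := by ring
    have b2 : |fderiv ℝ (fderiv ℝ (fderiv ℝ φ)) x (h • b) (h • b) (h • b)| ≤ B3*R^3*h^2 := by
      refine (abs_apply3 _ _ _ _).trans ?_
      calc ‖fderiv ℝ (fderiv ℝ (fderiv ℝ φ)) x‖ * ‖h • b‖ * ‖h • b‖ * ‖h • b‖
          ≤ B3 * (h*R) * (h*R) * (h*R) :=
            mul4_le (hB3' x) hu hu hu (norm_nonneg _) (norm_nonneg _) (norm_nonneg _)
              (norm_nonneg _)
        _ = B3*R^3*h^2*h := by ring
        _ ≤ B3*R^3*h^2*1 := by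
            have : 0 ≤ B3*R^3*h^2 := by
              have := mul_nonneg hB3nn (le_of_lt (by positivity : (0:ℝ) < R^3))
              positivity
            nlinarith
        _ = B3*R^3*h^2 := by ring
    have keyF3 : ∀ (a1 a2 a3 : E d) (t1 t2 t3 : ℝ), ‖a1‖ ≤ t1 → ‖a2‖ ≤ t2 → ‖a3‖ ≤ t3 →
        |fderiv ℝ (fderiv ℝ (fderiv ℝ φ)) x a1 a2 a3| ≤ B3 * t1 * t2 * t3 := by
      intro a1 a2 a3 t1 t2 t3 h1 h2 h3
      exact (abs_apply3 _ _ _ _).trans (mul4_le (hB3' x) h1 h2 h3 (norm_nonneg _)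
        (norm_nonneg _) (norm_nonneg _) (norm_nonneg _))
    have b3a : |fderiv ℝ (fderiv ℝ (fderiv ℝ φ)) x (h • b) (s • σ p) (s • σ p)|
        ≤ B3*R^3*(r:ℝ)*h^2 := by
      refine (keyF3 _ _ _ _ _ _ hu hv hv).trans_eq ?_
      rw [show B3*(h*R)*(s*R)*(s*R) = B3*R^3*h*(s*s) from by ring, hs2]; ring
    have b3b : |fderiv ℝ (fderiv ℝ (fderiv ℝ φ)) x (s • σ p) (h • b) (s • σ p)|
        ≤ B3*R^3*(r:ℝ)*h^2 := by
      refine (keyF3 _ _ _ _ _ _ hv hu hv).trans_eq ?_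
      rw [show B3*(s*R)*(h*R)*(s*R) = B3*R^3*h*(s*s) from by ring, hs2]; ring
    have b3c : |fderiv ℝ (fderiv ℝ (fderiv ℝ φ)) x (s • σ p) (s • σ p) (h • b)|
        ≤ B3*R^3*(r:ℝ)*h^2 := by
      refine (keyF3 _ _ _ _ _ _ hv hv hu).trans_eq ?_
      rw [show B3*(s*R)*(s*R)*(h*R) = B3*R^3*h*(s*s) from by ring, hs2]; ring
    -- remainder bounds
    have hwpn : ‖h • b + s • σ p‖ ≤ h*R + s*R :=
      le_trans (norm_add_le _ _) (add_le_add hu hv)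
    have hwmn : ‖h • b - s • σ p‖ ≤ h*R + s*R :=
      le_trans (norm_sub_le _ _) (add_le_add hu hv)
    have bremp := ep.trans
      (rem_bound hB4nn hR hh0 hh1 hs2 (norm_nonneg _) hwpn)
    have bremm := em.trans
      (rem_bound hB4nn hR hh0 hh1 hs2 (norm_nonneg _) hwmn)
    -- combine
    rw [hdecomp, hK0def]
    exact combine_bound _ _ _ _ _ _ _ b1 b2 b3a b3b b3c bremp bremm
  -- express D2-sum via the second fderiv
  have hD2sum : ∑ i : Fin d, ∑ j : Fin d, (∑ p : Fin r, σ p i * σ p j) * D2 φ x i j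
      = ∑ p : Fin r, fderiv ℝ (fderiv ℝ φ) x (σ p) (σ p) := by
    have swap : ∀ (f : Fin d → Fin d → Fin r → ℝ),
        ∑ i, ∑ j, ∑ p, f i j p = ∑ p, ∑ i, ∑ j, f i j p := by
      intro f
      calc ∑ i, ∑ j, ∑ p, f i j p = ∑ i, ∑ p, ∑ j, f i j p :=
            Finset.sum_congr rfl (fun i _ => Finset.sum_comm)
        _ = ∑ p, ∑ i, ∑ j, f i j p := Finset.sum_comm
    calc ∑ i : Fin d, ∑ j : Fin d, (∑ p : Fin r, σ p i * σ p j) * D2 φ x i j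
        = ∑ i : Fin d, ∑ j : Fin d, ∑ p : Fin r, σ p i * σ p j *
            fderiv ℝ (fderiv ℝ φ) x (EuclideanSpace.single i 1) (EuclideanSpace.single j 1) := by
          refine Finset.sum_congr rfl fun i _ => Finset.sum_congr rfl fun j _ => ?_
          rw [D2_eq hφ, Finset.sum_mul]
      _ = ∑ p : Fin r, ∑ i : Fin d, ∑ j : Fin d, σ p i * σ p j *
            fderiv ℝ (fderiv ℝ φ) x (EuclideanSpace.single i 1) (EuclideanSpace.single j 1) :=
          swap _
      _ = ∑ p : Fin r, fderiv ℝ (fderiv ℝ φ) x (σ p) (σ p) :=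
          Finset.sum_congr rfl fun p _ => (bilin_basis _ (σ p)).symm
  have hr0 : ((r:ℝ)) ≠ 0 := ne_of_gt hrpos
  -- rewrite the LHS as an average of the per-p errors
  have key : (1/(2*(r:ℝ))) * ∑ p : Fin r,
        (φ (x + h • b + s • σ p) + φ (x + h • b - s • σ p))
      - φ x - h * fderiv ℝ φ x b
      - (h/2) * ∑ i : Fin d, ∑ j : Fin d, (∑ p : Fin r, σ p i * σ p j) * D2 φ x i j
      = (1/(2*(r:ℝ))) * ∑ p : Fin r,
        ((φ (x + h • b + s • σ p) + φ (x + h • b - s • σ p))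
          - 2*φ x - 2*(h * fderiv ℝ φ x b)
          - ((r:ℝ)*h) * fderiv ℝ (fderiv ℝ φ) x (σ p) (σ p)) := by
    rw [hD2sum]
    rw [Finset.sum_sub_distrib, Finset.sum_sub_distrib, Finset.sum_sub_distrib,
      Finset.sum_const, Finset.sum_const, ← Finset.mul_sum]
    simp only [Finset.card_univ, Fintype.card_fin, nsmul_eq_mul]
    field_simp
  rw [key]
  have h2r : (0:ℝ) < 1/(2*(r:ℝ)) := by positivity
  calc |(1/(2*(r:ℝ))) * ∑ p : Fin r,
        ((φ (x + h • b + s • σ p) + φ (x + h • b - s • σ p))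
          - 2*φ x - 2*(h * fderiv ℝ φ x b)
          - ((r:ℝ)*h) * fderiv ℝ (fderiv ℝ φ) x (σ p) (σ p))|
      = (1/(2*(r:ℝ))) * |∑ p : Fin r,
        ((φ (x + h • b + s • σ p) + φ (x + h • b - s • σ p))
          - 2*φ x - 2*(h * fderiv ℝ φ x b)
          - ((r:ℝ)*h) * fderiv ℝ (fderiv ℝ φ) x (σ p) (σ p))| := by
        rw [abs_mul, abs_of_pos h2r]
    _ ≤ (1/(2*(r:ℝ))) * ((r:ℝ) * (K0 * h^2)) := by
        refine mul_le_mul_of_nonneg_left ?_ h2r.le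
        calc |∑ p : Fin r, ((φ (x + h • b + s • σ p) + φ (x + h • b - s • σ p))
              - 2*φ x - 2*(h * fderiv ℝ φ x b)
              - ((r:ℝ)*h) * fderiv ℝ (fderiv ℝ φ) x (σ p) (σ p))|
            ≤ ∑ p : Fin r, |(φ (x + h • b + s • σ p) + φ (x + h • b - s • σ p))
              - 2*φ x - 2*(h * fderiv ℝ φ x b)
              - ((r:ℝ)*h) * fderiv ℝ (fderiv ℝ φ) x (σ p) (σ p)| :=
              Finset.abs_sum_le_sum_abs _ _
          _ ≤ ∑ _p : Fin r, K0 * h^2 := Finset.sum_le_sum fun p _ => hJ p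
          _ = (r:ℝ) * (K0 * h^2) := by
              rw [Finset.sum_const, Finset.card_univ, Fintype.card_fin, nsmul_eq_mul]
    _ = (K0/2) * h^2 := by field_simp
    _ ≤ (K0 + 1) * h^2 := by nlinarith [sq_nonneg h]
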